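/- The map σ ↦ R_σ is injective on involutions: if σ and τ are involutions of {1,…,n} with R_σ = R_τ, then σ = τ. Consequently the entrywise order ⪯ restricted to rank matrices of involutions is a partial order on the set of involutions. -/

import Mathlib

open Matrix

/-- A matrix is strictly upper-triangular. -/
def StrictUpper {n : ℕ} (x : Matrix (Fin n) (Fin n) ℂ) : Prop :=
  ∀ a b : Fin n, b ≤ a → x a b = 0

/-- A matrix is (weakly) upper-triangular. -/
def UpperTri {n : ℕ} (x : Matrix (Fin n) (Fin n) ℂ) : Prop :=
  ∀ a b : Fin n, b < a → x a b = 0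

/-- The orbit of a matrix under conjugation by invertible upper-triangular matrices. -/
def Borbit {n : ℕ} (x : Matrix (Fin n) (Fin n) ℂ) : Set (Matrix (Fin n) (Fin n) ℂ) :=
  {y | ∃ b : Matrix (Fin n) (Fin n) ℂ, IsUnit b ∧ UpperTri b ∧ y = b * x * b⁻¹}

/-- A permutation is an involution. -/
def IsInvol {n : ℕ} (σ : Equiv.Perm (Fin n)) : Prop := σ * σ = 1

/-- The strictly upper-triangular part `N_σ` of the permutation matrix of `σ`. -/
def Nmat {n : ℕ} (σ : Equiv.Perm (Fin n)) : Matrix (Fin n) (Fin n) ℂ :=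
  Matrix.of fun a b => if a < b ∧ σ a = b then (1 : ℂ) else 0

/-- The submatrix `π_{i,j}(x)` on rows and columns `i,…,j` (1-based), for `1 ≤ i ≤ j ≤ n`. -/
def blk {n : ℕ} (x : Matrix (Fin n) (Fin n) ℂ) (i j : ℕ)
    (h1 : 1 ≤ i) (h2 : i ≤ j) (h3 : j ≤ n) :
    Matrix (Fin (j + 1 - i)) (Fin (j + 1 - i)) ℂ :=
  Matrix.of fun a b =>
    x ⟨i - 1 + a.1, by have := a.2; omega⟩ ⟨i - 1 + b.1, by have := b.2; omega⟩

/-- The rank matrix of `N_σ` (1-based indices, 0 outside the range `1 ≤ i < j ≤ n`). -/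
noncomputable def Rfun {n : ℕ} (σ : Equiv.Perm (Fin n)) : ℕ → ℕ → ℕ := fun i j =>
  if h : 1 ≤ i ∧ i < j ∧ j ≤ n then (blk (Nmat σ) i j h.1 h.2.1.le h.2.2).rank
  else 0

/-- The number of two-cycles of an involution. -/
def numCycles {n : ℕ} (σ : Equiv.Perm (Fin n)) : ℕ :=
  (Finset.univ.filter fun a : Fin n => a < σ a).card

/-- Evaluation of a polynomial in the matrix entries at a matrix. -/
noncomputable def evalMat {n : ℕ} (x : Matrix (Fin n) (Fin n) ℂ)
    (f : MvPolynomial (Fin n × Fin n) ℂ) : ℂ :=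
  MvPolynomial.eval (fun p => x p.1 p.2) f

/-- The vanishing ideal of a set of matrices. -/
noncomputable def vanishingIdeal {n : ℕ} (S : Set (Matrix (Fin n) (Fin n) ℂ)) :
    Ideal (MvPolynomial (Fin n × Fin n) ℂ) where
  carrier := {f | ∀ x ∈ S, evalMat x f = 0}
  add_mem' := by
    intro a b ha hb x hx
    simp only [evalMat, map_add] at *
    rw [ha x hx, hb x hx, add_zero]
  zero_mem' := by
    intro x hx
    simp [evalMat]
  smul_mem' := by
    intro c f hf x hx
    simp only [evalMat, smul_eq_mul, _root_.map_mul] at *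
    rw [hf x hx, mul_zero]

/-- The Zariski closure of a set of matrices: the common zero set of its vanishing ideal. -/
noncomputable def zclosure {n : ℕ} (S : Set (Matrix (Fin n) (Fin n) ℂ)) :
    Set (Matrix (Fin n) (Fin n) ℂ) :=
  {x | ∀ f ∈ vanishingIdeal S, evalMat x f = 0}

/-- The space of upper-triangular matrices commuting with a given matrix
(the Lie algebra of the stabilizer of `N` in `B`). -/
noncomputable def commUT {n : ℕ} (N : Matrix (Fin n) (Fin n) ℂ) :
    Submodule ℂ (Matrix (Fin n) (Fin n) ℂ) where
  carrier := {z | UpperTri z ∧ z * N = N * z}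
  add_mem' := by
    rintro a b ⟨ha1, ha2⟩ ⟨hb1, hb2⟩
    refine ⟨fun p q h => ?_, by rw [add_mul, mul_add, ha2, hb2]⟩
    simp [Matrix.add_apply, ha1 p q h, hb1 p q h]
  zero_mem' := ⟨fun p q h => rfl, by simp⟩
  smul_mem' := by
    rintro c a ⟨ha1, ha2⟩
    refine ⟨fun p q h => ?_, by rw [Matrix.smul_mul, Matrix.mul_smul, ha2]⟩
    simp [Matrix.smul_apply, ha1 p q h]



lemma rank_aux {m : ℕ} (P : Fin m → Prop) [DecidablePred P] (f : Fin m → Fin m)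
    (hf : ∀ r r', P r → P r' → f r = f r' → r = r') :
    (Matrix.of fun r s : Fin m => if P r ∧ s = f r then (1:ℂ) else 0).rank
      = (Finset.univ.filter P).card := by
  set A : Matrix (Fin m) (Fin m) ℂ :=
    Matrix.of fun r s : Fin m => if P r ∧ s = f r then (1:ℂ) else 0 with hA
  have hrank : A.rank = Module.finrank ℂ (Submodule.span ℂ (Set.range Aᵀ)) := by
    rw [Matrix.rank, Matrix.range_mulVecLin]
    rfl
  have hspan : Submodule.span ℂ (Set.range Aᵀ)
      = Submodule.span ℂ (Set.range fun r : {r // P r} => (Pi.single r.1 (1:ℂ) : Fin m → ℂ)) := by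
    apply le_antisymm
    · rw [Submodule.span_le]
      rintro _ ⟨s, rfl⟩
      by_cases hs : ∃ r, P r ∧ f r = s
      · obtain ⟨r, hr, hfr⟩ := hs
        have hcol : Aᵀ s = Pi.single r (1:ℂ) := by
          funext r'
          simp only [transpose_apply, hA, of_apply]
          by_cases h' : r' = r
          · subst h'
            simp [hr, hfr.symm, Pi.single_eq_same]
          · rw [Pi.single_eq_of_ne h', if_neg]
            rintro ⟨hr', hs'⟩
            exact h' (hf r' r hr' hr (by rw [← hs', hfr]))
        rw [hcol]
        exact Submodule.subset_span ⟨⟨r, hr⟩, rfl⟩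
      · have hcol : Aᵀ s = 0 := by
          funext r'
          simp only [transpose_apply, hA, of_apply, Pi.zero_apply]
          rw [if_neg]
          rintro ⟨hr', hs'⟩
          exact hs ⟨r', hr', hs'.symm⟩
        rw [hcol]
        exact Submodule.zero_mem _
    · rw [Submodule.span_le]
      rintro _ ⟨⟨r, hr⟩, rfl⟩
      have hcol : (Pi.single r (1:ℂ) : Fin m → ℂ) = Aᵀ (f r) := by
        funext r'
        simp only [transpose_apply, hA, of_apply]
        by_cases h' : r' = r
        · subst h'; simp [hr]
        · rw [Pi.single_eq_of_ne h', if_neg]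
          rintro ⟨hr', hs'⟩
          exact h' (hf r' r hr' hr hs'.symm)
      show (Pi.single r (1:ℂ) : Fin m → ℂ) ∈ _
      rw [hcol]
      exact Submodule.subset_span ⟨f r, rfl⟩
  have hli : LinearIndependent ℂ (fun r : {r // P r} => (Pi.single r.1 (1:ℂ) : Fin m → ℂ)) := by
    have h1 := (Pi.basisFun ℂ (Fin m)).linearIndependent
    have h2 := h1.comp (Subtype.val : {r // P r} → Fin m) Subtype.val_injective
    convert h2 using 1
    funext r
    simp [Function.comp, Pi.basisFun_apply]
  rw [hrank, hspan, finrank_span_eq_card hli, Fintype.card_subtype]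

def gcount {n : ℕ} (σ : Equiv.Perm (Fin n)) (a b : ℕ) : ℕ :=
  (Finset.univ.filter fun c : Fin n => a ≤ c.1 ∧ c.1 < (σ c).1 ∧ (σ c).1 ≤ b).card

def dA {n : ℕ} (σ : Equiv.Perm (Fin n)) (a b : ℕ) : ℕ :=
  if h : a < n then (if a < (σ ⟨a, h⟩).1 ∧ (σ ⟨a, h⟩).1 ≤ b then 1 else 0) else 0

def dB {n : ℕ} (σ : Equiv.Perm (Fin n)) (a b : ℕ) : ℕ :=
  if h : a < n then (if a < (σ ⟨a, h⟩).1 ∧ (σ ⟨a, h⟩).1 = b then 1 else 0) else 0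

lemma Rfun_eq_gcount {n : ℕ} (σ : Equiv.Perm (Fin n)) (a b : ℕ)
    (hab : a < b) (hb : b + 1 ≤ n) :
    Rfun σ (a + 1) (b + 1) = gcount σ a b := by
  have h : 1 ≤ a + 1 ∧ a + 1 < b + 1 ∧ b + 1 ≤ n := ⟨by omega, by omega, hb⟩
  rw [Rfun, dif_pos h]
  set m := b + 1 + 1 - (a + 1) with hm
  have hmpos : 0 < m := by omega
  have hmval : m = b + 2 - (a + 1) := rfl
  set e : Fin m → Fin n := fun r => ⟨a + 1 - 1 + r.1, by have := r.2; omega⟩ with he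
  have heval : ∀ r : Fin m, (e r).1 = a + r.1 := fun r => by
    show a + 1 - 1 + r.1 = a + r.1; omega
  set P : Fin m → Prop := fun r => (e r).1 < (σ (e r)).1 ∧ (σ (e r)).1 ≤ b with hP
  set f : Fin m → Fin m := fun r => ⟨((σ (e r)).1 - a) % m, Nat.mod_lt _ hmpos⟩ with hfdef
  have key : ∀ r, P r → ((σ (e r)).1 - a) % m = (σ (e r)).1 - a := by
    intro r hr
    apply Nat.mod_eq_of_lt
    have h1 := hr.1
    have h2 := hr.2
    have := heval r
    omega
  have hblk : blk (Nmat σ) (a+1) (b+1) h.1 h.2.1.le h.2.2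
      = Matrix.of fun r s : Fin m => if P r ∧ s = f r then (1:ℂ) else 0 := by
    ext r s
    show (if e r < e s ∧ σ (e r) = e s then (1:ℂ) else 0)
      = if P r ∧ s = f r then (1:ℂ) else 0
    apply if_congr _ rfl rfl
    constructor
    · rintro ⟨hlt, heq⟩
      have hlt' : (e r).1 < (e s).1 := hlt
      have hv : (σ (e r)).1 = (e s).1 := by rw [heq]
      have hs2 := s.2
      have her := heval r
      have hes := heval s
      refine ⟨⟨by omega, by omega⟩, ?_⟩
      apply Fin.ext
      show s.1 = ((σ (e r)).1 - a) % m
      rw [hv]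
      rw [Nat.mod_eq_of_lt (by omega)]
      omega
    · rintro ⟨hPr, rfl⟩
      have h1 := hPr.1
      have h2 := hPr.2
      have her := heval r
      have hmod := key r hPr
      have hfv : (e (f r)).1 = (σ (e r)).1 := by
        rw [heval]
        show a + ((σ (e r)).1 - a) % m = _
        omega
      have heq : σ (e r) = e (f r) := Fin.ext (by omega)
      exact ⟨show (e r).1 < (e (f r)).1 by omega, heq⟩
  rw [hblk, rank_aux P f]
  · rw [gcount]
    apply Finset.card_bij (fun r _ => e r)
    · intro r hr
      simp only [Finset.mem_filter, Finset.mem_univ, true_and] at hr ⊢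
      have := heval r
      exact ⟨by omega, hr.1, hr.2⟩
    · intro r _ r' _ hrr
      apply Fin.ext
      have := heval r; have := heval r'
      have : (e r).1 = (e r').1 := by rw [hrr]
      omega
    · intro c hc
      simp only [Finset.mem_filter, Finset.mem_univ, true_and] at hc
      obtain ⟨hc1, hc2, hc3⟩ := hc
      have hlt : c.1 - a < m := by omega
      have hec : e ⟨c.1 - a, hlt⟩ = c := Fin.ext (by
        show a + 1 - 1 + (c.1 - a) = c.1; omega)
      refine ⟨⟨c.1 - a, hlt⟩, ?_, hec⟩
      simp only [Finset.mem_filter, Finset.mem_univ, true_and]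
      show (e ⟨c.1 - a, hlt⟩).1 < (σ (e ⟨c.1 - a, hlt⟩)).1 ∧ (σ (e ⟨c.1 - a, hlt⟩)).1 ≤ b
      rw [hec]
      exact ⟨hc2, hc3⟩
  · intro r r' hr hr' hff
    have h1 : ((σ (e r)).1 - a) % m = ((σ (e r')).1 - a) % m := congrArg Fin.val hff
    rw [key r hr, key r' hr'] at h1
    have h2 : (σ (e r)).1 = (σ (e r')).1 := by
      have := hr.1; have := hr'.1; have := heval r; have := heval r'; omega
    have h3 : e r = e r' := σ.injective (Fin.ext h2)
    apply Fin.ext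
    have := heval r; have := heval r'
    have : (e r).1 = (e r').1 := by rw [h3]
    omega

lemma gcount_split {n : ℕ} (σ : Equiv.Perm (Fin n)) (a b : ℕ) :
    gcount σ a b = gcount σ (a + 1) b + dA σ a b := by
  rw [gcount, gcount]
  have hsplit : (Finset.univ.filter fun c : Fin n => a ≤ c.1 ∧ c.1 < (σ c).1 ∧ (σ c).1 ≤ b)
      = (Finset.univ.filter fun c : Fin n => a + 1 ≤ c.1 ∧ c.1 < (σ c).1 ∧ (σ c).1 ≤ b)
        ∪ (Finset.univ.filter fun c : Fin n => c.1 = a ∧ c.1 < (σ c).1 ∧ (σ c).1 ≤ b) := by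
    ext c
    simp only [Finset.mem_filter, Finset.mem_univ, true_and, Finset.mem_union]
    constructor
    · rintro ⟨h1, h2⟩
      rcases Nat.lt_or_ge a c.1 with h | h
      · exact Or.inl ⟨h, h2⟩
      · exact Or.inr ⟨by omega, h2⟩
    · rintro (⟨h1, h2⟩ | ⟨h1, h2⟩) <;> exact ⟨by omega, h2⟩
  rw [hsplit, Finset.card_union_of_disjoint]
  · congr 1
    rw [dA]
    by_cases hn : a < n
    · rw [dif_pos hn]
      by_cases hq : a < (σ ⟨a, hn⟩).1 ∧ (σ ⟨a, hn⟩).1 ≤ b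
      · rw [if_pos hq]
        rw [Finset.card_eq_one]
        refine ⟨⟨a, hn⟩, ?_⟩
        ext c
        simp only [Finset.mem_filter, Finset.mem_univ, true_and, Finset.mem_singleton]
        constructor
        · rintro ⟨h1, h2⟩
          exact Fin.ext h1
        · rintro rfl
          exact ⟨rfl, hq.1, hq.2⟩
      · rw [if_neg hq, Finset.card_eq_zero, Finset.filter_eq_empty_iff]
        rintro c _ ⟨h1, h2, h3⟩
        have : c = ⟨a, hn⟩ := Fin.ext h1
        subst this
        exact hq ⟨h2, h3⟩
    · rw [dif_neg hn, Finset.card_eq_zero, Finset.filter_eq_empty_iff]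
      rintro c _ ⟨h1, _⟩
      exact hn (h1 ▸ c.2)
  · rw [Finset.disjoint_left]
    intro c hc1 hc2
    simp only [Finset.mem_filter, Finset.mem_univ, true_and] at hc1 hc2
    omega
  ---
lemma dA_zero {n : ℕ} (σ : Equiv.Perm (Fin n)) (a : ℕ) : dA σ a 0 = 0 := by
  rw [dA]; split_ifs with h1 h2
  · omega
  · rfl
  · rfl

lemma dA_split {n : ℕ} (σ : Equiv.Perm (Fin n)) (a b : ℕ) :
    dA σ a (b + 1) = dA σ a b + dB σ a (b + 1) := by
  rw [dA, dA, dB]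
  split_ifs <;> omega

lemma dB_zero {n : ℕ} (σ : Equiv.Perm (Fin n)) (a : ℕ) : dB σ a 0 = 0 := by
  rw [dB]; split_ifs with h1 h2
  · omega
  · rfl
  · rfl

lemma invol_apply {n : ℕ} {σ : Equiv.Perm (Fin n)} (h : IsInvol σ) (x : Fin n) :
    σ (σ x) = x := by
  have := Equiv.ext_iff.mp h x
  simpa using this

lemma perm_eq_of_dB {n : ℕ} (σ τ : Equiv.Perm (Fin n)) (hσ : IsInvol σ) (hτ : IsInvol τ)
    (hdB : ∀ a b, dB σ a b = dB τ a b) : σ = τ := by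
  have key : ∀ (ρ ρ' : Equiv.Perm (Fin n)), (∀ a b, dB ρ a b = dB ρ' a b) →
      ∀ x : Fin n, x.1 < (ρ x).1 → ρ' x = ρ x := by
    intro ρ ρ' hd x hx
    have h1 : dB ρ x.1 (ρ x).1 = 1 := by
      have hcond : x.1 < (ρ ⟨x.1, x.2⟩).1 ∧ (ρ ⟨x.1, x.2⟩).1 = (ρ x).1 := ⟨hx, rfl⟩
      rw [dB, dif_pos x.2, if_pos hcond]
    rw [hd] at h1
    rw [dB, dif_pos x.2] at h1
    simp only [Fin.eta] at h1
    by_cases h2 : x.1 < (ρ' x).1 ∧ (ρ' x).1 = (ρ x).1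
    · exact Fin.ext h2.2
    · rw [if_neg h2] at h1; omega
  ext x
  rcases lt_trichotomy x.1 ((σ x) : Fin n).1 with h | h | h
  · rw [key σ τ hdB x h]
  · have hfix : σ x = x := Fin.ext h.symm
    rcases lt_trichotomy x.1 ((τ x) : Fin n).1 with h' | h' | h'
    · have := key τ σ (fun a b => (hdB a b).symm) x h'
      omega
    · rw [hfix, Fin.ext h'.symm]
    · exfalso
      set c := τ x with hc
      have hτc : τ c = x := invol_apply hτ x
      have hcc : c.1 < (τ c).1 := by rw [hτc]; exact h'
      have := key τ σ (fun a b => (hdB a b).symm) c hcc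
      rw [hτc] at this
      have : c = x := σ.injective (by rw [this, hfix])
      omega
  · set c := σ x with hc
    have hσc : σ c = x := invol_apply hσ x
    have hcc : c.1 < (σ c).1 := by rw [hσc]; exact h
    have h2 := key σ τ hdB c hcc
    rw [hσc] at h2
    have h3 : τ x = c := by rw [← h2, invol_apply hτ c]
    rw [h3]

lemma gcount_zero {n : ℕ} (σ : Equiv.Perm (Fin n)) (a b : ℕ)
    (h : ¬(a < b ∧ a + 1 < n)) : gcount σ a b = 0 := by
  rw [gcount, Finset.card_eq_zero, Finset.filter_eq_empty_iff]
  rintro c _ ⟨h1, h2, h3⟩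
  have hc := c.2
  have hsc := (σ c).2
  omega

lemma gcount_trim {n : ℕ} (σ : Equiv.Perm (Fin n)) (a b : ℕ) :
    gcount σ a b = gcount σ a (min b (n - 1)) := by
  rw [gcount, gcount]
  congr 1
  apply Finset.filter_congr
  intro c _
  have h1 := (σ c).2
  constructor <;> rintro ⟨x, y, z⟩ <;> exact ⟨x, y, by omega⟩

/-- `σ ↦ R_σ` is injective on involutions; consequently the entrywise order
on rank matrices is a partial order on involutions (antisymmetry). -/
theorem stmt6 (n : ℕ) (hn : 1 ≤ n) :
    (∀ σ τ : Equiv.Perm (Fin n), IsInvol σ → IsInvol τ →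
      (∀ i j, Rfun σ i j = Rfun τ i j) → σ = τ) ∧
    (∀ σ τ : Equiv.Perm (Fin n), IsInvol σ → IsInvol τ →
      (∀ i j, Rfun σ i j ≤ Rfun τ i j) → (∀ i j, Rfun τ i j ≤ Rfun σ i j) → σ = τ) := by
  have main : ∀ σ τ : Equiv.Perm (Fin n), IsInvol σ → IsInvol τ →
      (∀ i j, Rfun σ i j = Rfun τ i j) → σ = τ := by
    intro σ τ hσ hτ hR
    have hg : ∀ a b, gcount σ a b = gcount τ a b := by
      intro a b
      by_cases hc : a < b ∧ a + 1 < n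
      · have h1 : a < min b (n - 1) := by omega
        have h2 : min b (n - 1) + 1 ≤ n := by omega
        rw [gcount_trim σ a b, gcount_trim τ a b, ← Rfun_eq_gcount σ a _ h1 h2,
          ← Rfun_eq_gcount τ a _ h1 h2, hR]
      · rw [gcount_zero σ a b hc, gcount_zero τ a b hc]
    have hdA : ∀ a b, dA σ a b = dA τ a b := by
      intro a b
      have h1 := gcount_split σ a b
      have h2 := gcount_split τ a b
      have h3 := hg a b
      have h4 := hg (a + 1) b
      omega
    have hdB : ∀ a b, dB σ a b = dB τ a b := by
      intro a b
      cases b with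
      | zero => rw [dB_zero, dB_zero]
      | succ b =>
        have h1 := dA_split σ a b
        have h2 := dA_split τ a b
        have h3 := hdA a b
        have h4 := hdA a (b + 1)
        omega
    exact perm_eq_of_dB σ τ hσ hτ hdB
  exact ⟨main, fun σ τ hσ hτ h1 h2 =>
    main σ τ hσ hτ (fun i j => le_antisymm (h1 i j) (h2 i j))⟩
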